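/- Let P be a partially ordered set. If P is well-quasi-ordered and the set 𝒥^¬↓(P) of non-principal ideals of P is linearly ordered by inclusion, then P is better-quasi-ordered. -/

import Mathlib

open Set

/-- `s` is an initial segment of the finite set `t` (w.r.t. increasing enumerations). -/
def InitSeg (s t : Finset ℕ) : Prop :=
  s ⊆ t ∧ ∀ x ∈ s, ∀ y ∈ t, y ∉ s → x < y

/-- `s` is an initial segment of the set `X ⊆ ℕ`. -/
def InitSegSet (s : Finset ℕ) (X : Set ℕ) : Prop :=
  ↑s ⊆ X ∧ ∀ x ∈ s, ∀ y ∈ X, y ∉ s → x < y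

/-- The union of a family of finite subsets of `ℕ`. -/
def unionOf (B : Set (Finset ℕ)) : Set ℕ := ⋃ s ∈ B, (s : Set ℕ)

/-- `B` is a block: `B` is infinite and every infinite subset of `⋃ B` has a nonempty
initial segment belonging to `B`. -/
def IsBlock (B : Set (Finset ℕ)) : Prop :=
  B.Infinite ∧ ∀ X : Set ℕ, X ⊆ unionOf B → X.Infinite →
    ∃ s ∈ B, s.Nonempty ∧ InitSegSet s X

/-- `B` is a barrier: a block no member of which is a proper subset of another member. -/
def IsBarrier (B : Set (Finset ℕ)) : Prop :=
  IsBlock B ∧ ∀ s ∈ B, ∀ t ∈ B, s ⊆ t → s = t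

/-- `B` is a thin block: a block which is an antichain under the initial-segment order. -/
def IsThinBlock (B : Set (Finset ℕ)) : Prop :=
  IsBlock B ∧ ∀ s ∈ B, ∀ t ∈ B, InitSeg s t → s = t

/-- `s ◁ t`: there is `r` such that `s` is a proper initial segment of `r` and `t` is
obtained from `r` by removing its least element. -/
def Tri (s t : Finset ℕ) : Prop :=
  ∃ r : Finset ℕ, InitSeg s r ∧ s ≠ r ∧ ∃ a ∈ r, (∀ b ∈ r, a ≤ b) ∧ t = r.erase a

/-- The map `f` is good on `B` w.r.t. the quasi-order `le`. -/
def GoodPair {Q : Type*} (le : Q → Q → Prop) (B : Set (Finset ℕ)) (f : Finset ℕ → Q) : Prop :=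
  ∃ s ∈ B, ∃ t ∈ B, Tri s t ∧ le (f s) (f t)

/-- A quasi-order is better-quasi-ordered if every map from every barrier into it is good. -/
def IsBqo {Q : Type*} (le : Q → Q → Prop) : Prop :=
  ∀ B : Set (Finset ℕ), IsBarrier B → ∀ f : Finset ℕ → Q, GoodPair le B f

/-- A quasi-order is well-quasi-ordered if it has no infinite strictly descending sequence
and no infinite antichain. -/
def IsWqo {Q : Type*} (le : Q → Q → Prop) : Prop :=
  (¬ ∃ f : ℕ → Q, ∀ n, le (f (n + 1)) (f n) ∧ ¬ le (f n) (f (n + 1))) ∧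
    ¬ ∃ f : ℕ → Q, ∀ m n : ℕ, m ≠ n → ¬ le (f m) (f n)

/-- The strict lexicographic order on finite subsets of `ℕ` (via increasing enumerations;
a proper initial segment is lexicographically smaller). -/
def lexLT (s t : Finset ℕ) : Prop :=
  List.Lex (· < ·) (s.sort (· ≤ ·)) (t.sort (· ≤ ·))

/-- The order type of `B` under the lexicographic order is at most `α`: there is a
map of `B` into the ordinals `< α` which is strictly increasing w.r.t. `lexLT`. -/
def TypeLE (B : Set (Finset ℕ)) (α : Ordinal) : Prop :=
  ∃ g : Finset ℕ → Ordinal, (∀ s ∈ B, g s < α) ∧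
    ∀ s ∈ B, ∀ t ∈ B, lexLT s t → g s < g t

/-- A quasi-order is `α`-better-quasi-ordered if every map from a barrier of order type
at most `α` into it is good. -/
def IsAlphaBqo (α : Ordinal) {Q : Type*} (le : Q → Q → Prop) : Prop :=
  ∀ B : Set (Finset ℕ), IsBarrier B → TypeLE B α →
    ∀ f : Finset ℕ → Q, GoodPair le B f

/-- Domination quasi-order on subsets of a quasi-ordered set. -/
def DomRel {Q : Type*} (le : Q → Q → Prop) (A B : Set Q) : Prop :=
  ∀ a ∈ A, ∃ b ∈ B, le a b

/-- `I` is an ideal: nonempty, downward closed and up-directed. -/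
def IsIdealRel {Q : Type*} (le : Q → Q → Prop) (I : Set Q) : Prop :=
  I.Nonempty ∧ (∀ x y, le x y → y ∈ I → x ∈ I) ∧
    ∀ x ∈ I, ∀ y ∈ I, ∃ z ∈ I, le x z ∧ le y z

/-- `I` is principal: it has a greatest element. -/
def IsPrincipalRel {Q : Type*} (le : Q → Q → Prop) (I : Set Q) : Prop :=
  ∃ a ∈ I, ∀ x ∈ I, le x a

/-- A maximal antichain: an antichain not properly contained in any other antichain. -/
def IsMaxAntichainRel {Q : Type*} (le : Q → Q → Prop) (A : Set Q) : Prop :=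
  IsAntichain le A ∧ ∀ B : Set Q, IsAntichain le B → A ⊆ B → A = B

/-- An interval order: no `a < b`, `c < d` with each of `a, b` incomparable to each
of `c, d`. -/
def IsIntervalOrder (P : Type*) [Preorder P] : Prop :=
  ¬ ∃ a b c d : P, a < b ∧ c < d ∧
    ¬ a ≤ c ∧ ¬ c ≤ a ∧ ¬ a ≤ d ∧ ¬ d ≤ a ∧
    ¬ b ≤ c ∧ ¬ c ≤ b ∧ ¬ b ≤ d ∧ ¬ d ≤ b

/-- `a ≤_pred b` iff every strict predecessor of `a` is a strict predecessor of `b`. -/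
def predLE {P : Type*} [PartialOrder P] (a b : P) : Prop := ∀ x, x < a → x < b

/-- `a ≤_succ b` iff every strict successor of `b` is a strict successor of `a`. -/
def succLE {P : Type*} [PartialOrder P] (a b : P) : Prop := ∀ y, b < y → a < y

/-- `a ≤_crit b` iff `a ≤_pred b` and `a ≤_succ b`. -/
def critLE {P : Type*} [PartialOrder P] (a b : P) : Prop := predLE a b ∧ succLE a b

namespace BqoProof

attribute [local instance] Classical.propDecidable

/-- An increasing enumeration of part of an infinite set. -/
lemma exists_strictMono_into (K : Set ℕ) (hK : K.Infinite) :
    ∃ e : ℕ → ℕ, StrictMono e ∧ ∀ n, e n ∈ K := by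
  have step : ∀ x : ℕ, ∃ y ∈ K, x < y := fun x => hK.exists_gt x
  choose nxt hnxtK hnxtlt using step
  refine ⟨fun n => Nat.rec (nxt 0) (fun _ x => nxt x) n, ?_, ?_⟩
  · apply strictMono_nat_of_lt_succ
    intro n
    exact hnxtlt _
  · intro n
    cases n with
    | zero => exact hnxtK 0
    | succ m => exact hnxtK _

/-- One step of the Ramsey pivot construction. -/
noncomputable def rNext (c : ℕ → ℕ → Bool) (A : Set ℕ) : Set ℕ :=
  if ({x ∈ A \ {sInf A} | c (sInf A) x = true}).Infinite then
    {x ∈ A \ {sInf A} | c (sInf A) x = true}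
  else
    {x ∈ A \ {sInf A} | c (sInf A) x = false}

lemma rNext_spec (c : ℕ → ℕ → Bool) (A : Set ℕ) (hA : A.Infinite) :
    (rNext c A).Infinite ∧ rNext c A ⊆ A \ {sInf A} ∧
      ∃ b : Bool, ∀ x ∈ rNext c A, c (sInf A) x = b := by
  have hdiff : (A \ {sInf A}).Infinite := hA.diff (Set.finite_singleton _)
  have hunion : A \ {sInf A} ⊆
      {x ∈ A \ {sInf A} | c (sInf A) x = true} ∪ {x ∈ A \ {sInf A} | c (sInf A) x = false} := by
    intro x hx
    rcases Bool.eq_false_or_eq_true (c (sInf A) x) with h | h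
    · exact Or.inl ⟨hx, h⟩
    · exact Or.inr ⟨hx, h⟩
  unfold rNext
  split_ifs with h
  · exact ⟨h, fun x hx => hx.1, true, fun x hx => hx.2⟩
  · refine ⟨?_, fun x hx => hx.1, false, fun x hx => hx.2⟩
    have := hdiff.mono hunion
    rcases (by
      by_contra hc
      push_neg at hc
      exact this (hc.1.union hc.2) :
      ({x ∈ A \ {sInf A} | c (sInf A) x = true}).Infinite ∨
      ({x ∈ A \ {sInf A} | c (sInf A) x = false}).Infinite) with h1 | h2
    · exact absurd h1 h
    · exact h2

/-- Infinite Ramsey theorem for pairs, two colours. -/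
theorem ramsey2 (K : Set ℕ) (hK : K.Infinite) (c : ℕ → ℕ → Bool) :
    ∃ K' : Set ℕ, K' ⊆ K ∧ K'.Infinite ∧
      ∃ b : Bool, ∀ i ∈ K', ∀ j ∈ K', i < j → c i j = b := by
  classical
  -- the descending sequence of cubes
  set St : ℕ → Set ℕ := fun n => Nat.rec K (fun _ A => rNext c A) n with hSt
  have hSt0 : St 0 = K := rfl
  have hStsucc : ∀ n, St (n + 1) = rNext c (St n) := fun n => rfl
  have hinf : ∀ n, (St n).Infinite := by
    intro n
    induction n with
    | zero => exact hK
    | succ m ih => rw [hStsucc]; exact (rNext_spec c (St m) ih).1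
  have hsub : ∀ n, St (n + 1) ⊆ St n \ {sInf (St n)} := by
    intro n; rw [hStsucc]; exact (rNext_spec c (St n) (hinf n)).2.1
  have hmono : ∀ m n, m ≤ n → St n ⊆ St m := by
    intro m n h
    induction n with
    | zero => rw [Nat.le_zero.mp h]
    | succ k ih =>
      rcases Nat.le_succ_iff.mp h with h' | h'
      · exact ((hsub k).trans (Set.diff_subset)).trans (ih h')
      · rw [h']
  set a : ℕ → ℕ := fun n => sInf (St n) with ha
  have haMem : ∀ n, a n ∈ St n := fun n => Nat.sInf_mem (hinf n).nonempty
  have haLt : ∀ m n, m < n → a m < a n := by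
    intro m n h
    have h1 : a n ∈ St (m + 1) := hmono _ _ h (haMem n)
    have h2 : a n ∈ St m \ {sInf (St m)} := hsub m h1
    have := Nat.sInf_le h2.1
    exact lt_of_le_of_ne this (fun he => h2.2 he.symm)
  obtain ⟨b, hb⟩ : ∃ b : ℕ → Bool, ∀ m, ∀ x ∈ St (m + 1), c (a m) x = b m := by
    have := fun m => (rNext_spec c (St m) (hinf m)).2.2
    choose b hb using this
    exact ⟨b, fun m x hx => hb m x (by rw [← hStsucc]; exact hx)⟩
  -- pigeonhole on the colour sequence b
  have : ({m | b m = true}).Infinite ∨ ({m | b m = false}).Infinite := by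
    by_contra hc
    push_neg at hc
    have : (Set.univ : Set ℕ) ⊆ {m | b m = true} ∪ {m | b m = false} := by
      intro x _
      rcases Bool.eq_false_or_eq_true (b x) with h | h
      · exact Or.inl h
      · exact Or.inr h
    exact Set.infinite_univ (Set.Finite.subset
      (hc.1.union hc.2) this)
  have key : ∀ (β : Bool), ({m | b m = β}).Infinite →
      ∃ K' : Set ℕ, K' ⊆ K ∧ K'.Infinite ∧
        ∃ b : Bool, ∀ i ∈ K', ∀ j ∈ K', i < j → c i j = b := by
    intro β hS
    refine ⟨a '' {m | b m = β}, ?_, ?_, β, ?_⟩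
    · rintro x ⟨m, _, rfl⟩
      exact hmono 0 m (Nat.zero_le m) (haMem m)
    · have hinj : Function.Injective a := by
        intro x y hxy
        by_contra hne
        rcases Nat.lt_or_ge x y with h | h
        · exact absurd hxy (ne_of_lt (haLt _ _ h))
        · have h' : y < x := lt_of_le_of_ne h (Ne.symm hne)
          exact absurd hxy.symm (ne_of_lt (haLt _ _ h'))
      exact Set.Infinite.image (Set.injOn_of_injective hinj) hS
    · rintro i ⟨m, hm, rfl⟩ j ⟨n, hn, rfl⟩ hij
      have hmn : m < n := by
        by_contra h
        push_neg at h
        rcases Nat.lt_or_ge n m with h' | h'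
        · exact absurd (haLt n m h') (not_lt_of_gt hij)
        · have : n = m := le_antisymm h h'
          subst this
          exact lt_irrefl _ hij
      have : a n ∈ St (m + 1) := hmono _ _ hmn (haMem n)
      rw [hb m (a n) this]
      exact hm
  rcases this with h | h
  · exact key true h
  · exact key false h


section WqoFacts

variable {P : Type*} [PartialOrder P]

/-- In a wqo, every sequence has an increasing pair. -/
theorem wqo_good (hwqo : IsWqo ((· ≤ ·) : P → P → Prop)) (v : ℕ → P) :
    ∃ i j : ℕ, i < j ∧ v i ≤ v j := by
  by_contra hc
  push_neg at hc
  obtain ⟨K', _, hK'inf, b, hb⟩ :=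
    ramsey2 Set.univ Set.infinite_univ (fun i j => decide (v j ≤ v i))
  obtain ⟨e, he, heK⟩ := exists_strictMono_into K' hK'inf
  cases b with
  | true =>
    refine hwqo.1 ⟨fun n => v (e n), fun n => ⟨?_, ?_⟩⟩
    · have := hb (e n) (heK n) (e (n + 1)) (heK (n + 1)) (he (Nat.lt_succ_self n))
      exact of_decide_eq_true this
    · exact hc (e n) (e (n + 1)) (he (Nat.lt_succ_self n))
  | false =>
    refine hwqo.2 ⟨fun n => v (e n), fun m n hmn => ?_⟩
    rcases Nat.lt_or_ge m n with h | h
    · exact hc (e m) (e n) (he h)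
    · have h' : n < m := lt_of_le_of_ne h (Ne.symm hmn)
      have := hb (e n) (heK n) (e m) (heK m) (he h')
      exact of_decide_eq_false this

/-- From an infinite set of a wqo one can extract a strictly increasing chain. -/
theorem wqo_chain (hwqo : IsWqo ((· ≤ ·) : P → P → Prop)) (V : Set P) (hV : V.Infinite) :
    ∃ c : ℕ → P, (∀ n, c n ∈ V) ∧ ∀ m n : ℕ, m < n → c m < c n := by
  have f : ℕ ↪ V := hV.natEmbedding
  set v : ℕ → P := fun n => (f n : P) with hv
  have hvinj : Function.Injective v := by
    intro x y hxy
    exact f.injective (Subtype.ext hxy)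
  obtain ⟨K', _, hK'inf, b, hb⟩ :=
    ramsey2 Set.univ Set.infinite_univ (fun i j => decide (v i ≤ v j))
  obtain ⟨e, he, heK⟩ := exists_strictMono_into K' hK'inf
  cases b with
  | true =>
    refine ⟨fun n => v (e n), fun n => (f (e n)).2, fun m n hmn => ?_⟩
    have hle : v (e m) ≤ v (e n) :=
      of_decide_eq_true (hb (e m) (heK m) (e n) (heK n) (he hmn))
    exact lt_of_le_of_ne hle (fun heq => (he hmn).ne (hvinj heq))
  | false =>
    exfalso
    obtain ⟨i, j, hij, hvij⟩ := wqo_good hwqo (fun n => v (e n))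
    have := hb (e i) (heK i) (e j) (heK j) (he hij)
    exact of_decide_eq_false this hvij

end WqoFacts

section Galvin

variable (c2 : Set ℕ → Bool)

/-- `s` accepts inside `A`: some infinite `B ⊆ A` forces colour `false` on all sets
`s ∪ T` with `T` an infinite subset of `B` lying above `s`. -/
def accepts (s : Finset ℕ) (A : Set ℕ) : Prop :=
  ∃ B : Set ℕ, B ⊆ A ∧ B.Infinite ∧ ∀ T : Set ℕ, T ⊆ B → T.Infinite →
    (∀ x ∈ s, ∀ y ∈ T, x < y) → c2 (↑s ∪ T) = false

def rejects (s : Finset ℕ) (A : Set ℕ) : Prop := ¬ accepts c2 s A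

lemma accepts_mono {s : Finset ℕ} {A A' : Set ℕ} (h : A ⊆ A') (ha : accepts c2 s A) :
    accepts c2 s A' := by
  obtain ⟨B, hBA, hBinf, hB⟩ := ha
  exact ⟨B, hBA.trans h, hBinf, hB⟩

lemma rejects_mono {s : Finset ℕ} {A A' : Set ℕ} (h : A' ⊆ A) (hr : rejects c2 s A) :
    rejects c2 s A' := fun ha => hr (accepts_mono c2 h ha)

/-- Key step: below a rejecting pair, one can shrink the cube so that all one-point
extensions reject. -/
lemma galvin_step {s : Finset ℕ} {A : Set ℕ} (hA : A.Infinite) (hr : rejects c2 s A) :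
    ∃ A' : Set ℕ, A' ⊆ A ∧ A'.Infinite ∧ ∀ b ∈ A', rejects c2 (insert b s) A' := by
  by_contra hcon
  push_neg at hcon
  -- from failure, extract an increasing sequence of accepting extensions
  have key : ∀ (C : Set ℕ), C ⊆ A → C.Infinite →
      ∃ b ∈ C, accepts c2 (insert b s) C := by
    intro C hCA hCinf
    obtain ⟨b, hb, hacc⟩ := hcon C hCA hCinf
    -- hacc : ¬ rejects ... i.e. accepts
    exact ⟨b, hb, not_not.mp hacc⟩
  -- recursively build bᵢ and cubes
  -- state: an infinite subset of A
  have stepex : ∀ (C : Set ℕ), C ⊆ A → C.Infinite →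
      ∃ (b : ℕ) (C' : Set ℕ), b ∈ C ∧ C' ⊆ C ∧ C'.Infinite ∧ (∀ y ∈ C', b < y) ∧
        (∀ T : Set ℕ, T ⊆ C' → T.Infinite →
          (∀ x ∈ insert b s, ∀ y ∈ T, x < y) → c2 (↑(insert b s) ∪ T) = false) := by
    intro C hCA hCinf
    obtain ⟨b, hbC, B, hBC, hBinf, hB⟩ := key C hCA hCinf
    refine ⟨b, B ∩ {y | b < y}, hbC, (Set.inter_subset_left).trans hBC, ?_, ?_, ?_⟩
    · have : B \ (Set.Iic b) ⊆ B ∩ {y | b < y} := by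
        intro y hy
        exact ⟨hy.1, (lt_of_not_ge (fun hle => hy.2 hle) : b < y)⟩
      exact (hBinf.diff (Set.finite_Iic b)).mono this
    · exact fun y hy => hy.2
    · intro T hT hTinf hTb
      exact hB T (hT.trans Set.inter_subset_left) hTinf hTb
  -- build the sequence
  classical
  let StT := {C : Set ℕ // C ⊆ A ∧ C.Infinite}
  have stepex' : ∀ (st : StT), ∃ (b : ℕ) (st' : StT), b ∈ st.1 ∧ st'.1 ⊆ st.1 ∧
      (∀ y ∈ st'.1, b < y) ∧
      (∀ T : Set ℕ, T ⊆ st'.1 → T.Infinite →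
        (∀ x ∈ insert b s, ∀ y ∈ T, x < y) → c2 (↑(insert b s) ∪ T) = false) := by
    rintro ⟨C, hCA, hCinf⟩
    obtain ⟨b, C', hbC, hC'C, hC'inf, hgt, hforce⟩ := stepex C hCA hCinf
    exact ⟨b, ⟨C', hC'C.trans hCA, hC'inf⟩, hbC, hC'C, hgt, hforce⟩
  choose bf stf h1 h2 h3 h4 using stepex'
  set sq : ℕ → StT := fun n => Nat.rec ⟨A, subset_rfl, hA⟩ (fun _ st => stf st) n with hsq
  have hsqsucc : ∀ n, sq (n + 1) = stf (sq n) := fun n => rfl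
  set bb : ℕ → ℕ := fun n => bf (sq n) with hbb
  have hmem : ∀ n, bb n ∈ (sq n).1 := fun n => h1 (sq n)
  have hnest : ∀ n, (sq (n + 1)).1 ⊆ (sq n).1 := fun n => h2 (sq n)
  have hnest' : ∀ m n, m ≤ n → (sq n).1 ⊆ (sq m).1 := by
    intro m n h
    induction n with
    | zero => rw [Nat.le_zero.mp h]
    | succ k ih =>
      rcases Nat.le_succ_iff.mp h with h' | h'
      · exact (hnest k).trans (ih h')
      · rw [h']
  have hgt : ∀ m n, m < n → bb m < bb n := by
    intro m n h
    have : bb n ∈ (sq (m + 1)).1 := hnest' _ _ h (hmem n)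
    exact h3 (sq m) _ this
  -- now show s accepts in A, contradiction
  apply hr
  refine ⟨Set.range bb, ?_, ?_, ?_⟩
  · intro x ⟨n, hn⟩
    exact hn ▸ hnest' 0 n (Nat.zero_le n) (hmem n)
  · exact Set.infinite_range_of_injective (fun x y hxy => by
      by_contra hne
      rcases Nat.lt_or_ge x y with h | h
      · exact absurd hxy (ne_of_lt (hgt _ _ h))
      · exact absurd hxy.symm (ne_of_lt (hgt _ _ (lt_of_le_of_ne h (Ne.symm hne)))))
  · intro T hT hTinf hTs
    -- T ⊆ range bb; let i be index of its min
    have hTne : T.Nonempty := hTinf.nonempty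
    obtain ⟨i, hi⟩ : ∃ i, bb i = sInf T := hT (Nat.sInf_mem hTne)
    have hTsplit : (↑s ∪ T : Set ℕ) = ↑(insert (bb i) s) ∪ (T \ {sInf T}) := by
      ext x
      simp only [Set.mem_union, Finset.coe_insert, Set.mem_insert_iff, Set.mem_diff,
        Set.mem_singleton_iff, Finset.mem_coe]
      constructor
      · rintro (hx | hx)
        · exact Or.inl (Or.inr hx)
        · by_cases hxm : x = sInf T
          · exact Or.inl (Or.inl (hxm ▸ hi.symm))
          · exact Or.inr ⟨hx, hxm⟩
      · rintro (hx | hx)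
        · rcases hx with hx | hx
          · exact Or.inr (hx ▸ hi ▸ Nat.sInf_mem hTne)
          · exact Or.inl hx
        · exact Or.inr hx.1
    rw [hTsplit]
    apply h4 (sq i)
    · -- T \ {sInf T} ⊆ (sq (i+1)).1
      intro y hy
      obtain ⟨j, hj⟩ := hT hy.1
      have hyi : bb i < y := by
        have h1' : sInf T ≤ y := Nat.sInf_le hy.1
        have h2' : y ≠ sInf T := hy.2
        rw [hi]
        exact lt_of_le_of_ne h1' (Ne.symm h2')
      have hij : i < j := by
        by_contra hcon2
        push_neg at hcon2
        rcases Nat.lt_or_ge j i with h' | h'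
        · exact absurd (hj ▸ hgt _ _ h' : bb j < bb i) (not_lt_of_gt (hj ▸ hyi))
        · have : j = i := le_antisymm hcon2 h'
          rw [this] at hj
          exact absurd (hj ▸ hyi) (lt_irrefl _)
      rw [← hj]
      exact hnest' (i + 1) j hij (hmem j)
    · exact hTinf.diff (Set.finite_singleton _)
    · intro x hx y hy
      rcases Finset.mem_insert.mp hx with hx | hx
      · subst hx
        have h1' : sInf T ≤ y := Nat.sInf_le hy.1
        have : bb i < y := by
          rw [hi]
          exact lt_of_le_of_ne h1' (Ne.symm hy.2)
        exact this
      · exact hTs x hx y hy.1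

end Galvin

section GalvinMain

variable (c2 : Set ℕ → Bool)

lemma multi_step (F : Finset (Finset ℕ)) (A : Set ℕ) (hA : A.Infinite)
    (h : ∀ s ∈ F, rejects c2 s A) :
    ∃ A' : Set ℕ, A' ⊆ A ∧ A'.Infinite ∧
      ∀ s ∈ F, ∀ b ∈ A', rejects c2 (insert b s) A' := by
  classical
  induction F using Finset.induction_on with
  | empty => exact ⟨A, subset_rfl, hA, fun s hs => absurd hs (Finset.notMem_empty s)⟩
  | @insert t F htF ih =>
    obtain ⟨A1, hA1A, hA1inf, hA1⟩ := ih (fun s hs => h s (Finset.mem_insert_of_mem hs))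
    have hrt : rejects c2 t A1 := rejects_mono c2 hA1A (h t (Finset.mem_insert_self t F))
    obtain ⟨A2, hA2A1, hA2inf, hA2⟩ := galvin_step c2 hA1inf hrt
    refine ⟨A2, hA2A1.trans hA1A, hA2inf, ?_⟩
    intro s hs b hb
    rcases Finset.mem_insert.mp hs with hs | hs
    · subst hs
      exact hA2 b hb
    · exact rejects_mono c2 hA2A1 (hA1 s hs b (hA2A1 hb))

/-- Galvin's lemma, two colours: every continuous 2-colouring of the infinite subsets of
an infinite set of naturals is constant on the infinite subsets of some infinite subset. -/
theorem galvin2 (A : Set ℕ) (hA : A.Infinite)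
    (hc : ∀ X : Set ℕ, X ⊆ A → X.Infinite → ∃ n : ℕ, ∀ Y : Set ℕ, Y ⊆ A → Y.Infinite →
      (∀ m, m < n → (m ∈ Y ↔ m ∈ X)) → c2 Y = c2 X) :
    ∃ N : Set ℕ, N ⊆ A ∧ N.Infinite ∧ ∃ b : Bool, ∀ X : Set ℕ, X ⊆ N → X.Infinite →
      c2 X = b := by
  classical
  by_cases hacc : accepts c2 ∅ A
  · obtain ⟨B, hBA, hBinf, hB⟩ := hacc
    refine ⟨B, hBA, hBinf, false, fun X hX hXinf => ?_⟩
    have := hB X hX hXinf (by intro x hx; exact absurd hx (Finset.notMem_empty x))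
    simpa using this
  · -- the rejecting case: fusion
    set GS := {p : Finset ℕ × Set ℕ //
      p.2.Infinite ∧ (∀ s : Finset ℕ, s ⊆ p.1 → rejects c2 s p.2) ∧
      (∀ x ∈ p.1, ∀ y ∈ p.2, x < y) ∧ p.2 ⊆ A ∧ ↑p.1 ⊆ A} with hGS
    have hrej0 : ∀ s : Finset ℕ, s ⊆ (∅ : Finset ℕ) → rejects c2 s A := by
      intro s hs
      have : s = ∅ := Finset.subset_empty.mp hs
      subst this
      exact hacc
    have hbnd0 : ∀ x ∈ (∅ : Finset ℕ), ∀ y ∈ A, x < y := by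
      intro x hx
      exact absurd hx (Finset.notMem_empty x)
    have hsubA0 : ↑(∅ : Finset ℕ) ⊆ A := by simp
    set init : GS := ⟨(∅, A), hA, hrej0, hbnd0, subset_rfl, hsubA0⟩ with hinit
    have gstep : ∀ st : GS, ∃ (g : ℕ) (st' : GS),
        st'.1.1 = insert g st.1.1 ∧ st'.1.2 ⊆ st.1.2 ∧ g ∈ st.1.2 := by
      rintro ⟨⟨bs, C⟩, hCinf, hrej, hbnd, hCA, hbsA⟩
      obtain ⟨A', hA'C, hA'inf, hA'⟩ := multi_step c2 bs.powerset C hCinf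
        (fun s hs => hrej s (Finset.mem_powerset.mp hs))
      set g := sInf A' with hg
      have hgA' : g ∈ A' := Nat.sInf_mem hA'inf.nonempty
      refine ⟨g, ⟨(insert g bs, A' \ {g}), hA'inf.diff (Set.finite_singleton _), ?_, ?_, ?_, ?_⟩,
        rfl, (Set.diff_subset).trans hA'C, hA'C hgA'⟩
      · intro s hs
        by_cases hgs : g ∈ s
        · have hsub : s.erase g ⊆ bs := by
            intro x hx
            have := hs (Finset.mem_of_mem_erase hx)
            rcases Finset.mem_insert.mp this with h | h
            · exact absurd h (Finset.ne_of_mem_erase hx)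
            · exact h
          have := hA' (s.erase g) (Finset.mem_powerset.mpr hsub) g hgA'
          rw [Finset.insert_erase hgs] at this
          exact rejects_mono c2 (Set.diff_subset) this
        · have hsub : s ⊆ bs := by
            intro x hx
            rcases Finset.mem_insert.mp (hs hx) with h | h
            · exact absurd (h ▸ hx) hgs
            · exact h
          exact rejects_mono c2 ((Set.diff_subset).trans hA'C) (hrej s hsub)
      · intro x hx y hy
        rcases Finset.mem_insert.mp hx with h | h
        · subst h
          exact lt_of_le_of_ne (Nat.sInf_le hy.1) (Ne.symm hy.2)
        · exact hbnd x h y (hA'C hy.1)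
      · exact ((Set.diff_subset).trans hA'C).trans hCA
      · intro x hx
        rcases Finset.mem_insert.mp (Finset.mem_coe.mp hx) with h | h
        · exact h ▸ hCA (hA'C hgA')
        · exact hbsA h
    choose gf stf hbs hsub hgmem using gstep
    set sq : ℕ → GS := fun n => Nat.rec init (fun _ st => stf st) n with hsq
    have hsqsucc : ∀ n, sq (n + 1) = stf (sq n) := fun n => rfl
    set bb : ℕ → ℕ := fun n => gf (sq n) with hbb
    have hbs' : ∀ n, (sq (n + 1)).1.1 = insert (bb n) (sq n).1.1 := fun n => hbs (sq n)
    have hsub' : ∀ n, (sq (n + 1)).1.2 ⊆ (sq n).1.2 := fun n => hsub (sq n)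
    have hgmem' : ∀ n, bb n ∈ (sq n).1.2 := fun n => hgmem (sq n)
    have hnest : ∀ m n, m ≤ n → (sq n).1.2 ⊆ (sq m).1.2 := by
      intro m n h
      induction n with
      | zero => rw [Nat.le_zero.mp h]
      | succ k ih =>
        rcases Nat.le_succ_iff.mp h with h' | h'
        · exact (hsub' k).trans (ih h')
        · rw [h']
    have hbschar : ∀ n x, x ∈ (sq n).1.1 ↔ ∃ m, m < n ∧ bb m = x := by
      intro n
      induction n with
      | zero =>
        intro x
        constructor
        · intro hx
          exact absurd hx (by
            have : (sq 0).1.1 = (∅ : Finset ℕ) := rfl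
            rw [this]
            exact Finset.notMem_empty x)
        · rintro ⟨m, hm, _⟩
          exact absurd hm (Nat.not_lt_zero m)
      | succ k ih =>
        intro x
        rw [hbs' k, Finset.mem_insert]
        constructor
        · rintro (h | h)
          · exact ⟨k, Nat.lt_succ_self k, h.symm⟩
          · obtain ⟨m, hm, hmx⟩ := (ih x).mp h
            exact ⟨m, hm.trans (Nat.lt_succ_self k), hmx⟩
        · rintro ⟨m, hm, hmx⟩
          rcases Nat.lt_succ_iff_lt_or_eq.mp hm with h | h
          · exact Or.inr ((ih x).mpr ⟨m, h, hmx⟩)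
          · subst h
            exact Or.inl hmx.symm
    have hbblt : ∀ m n, m < n → bb m < bb n := by
      intro m n h
      have h1 : bb m ∈ (sq n).1.1 := (hbschar n (bb m)).mpr ⟨m, h, rfl⟩
      have h2 : bb n ∈ (sq n).1.2 := hgmem' n
      exact (sq n).2.2.2.1 (bb m) h1 (bb n) h2
    have hbbmono : StrictMono bb := fun m n h => hbblt m n h
    have hbbge : ∀ n, n ≤ bb n := fun n => hbbmono.le_apply
    have hbbA : ∀ n, bb n ∈ A := fun n => (sq n).2.2.2.2.1 (hgmem' n)
    refine ⟨Set.range bb, by rintro x ⟨n, rfl⟩; exact hbbA n,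
      Set.infinite_range_of_injective hbbmono.injective, true, ?_⟩
    intro X hX hXinf
    by_contra hcX
    have hcX : c2 X = false := by
      cases h : c2 X
      · rfl
      · exact absurd h hcX
    obtain ⟨n, hn⟩ := hc X (hX.trans (by rintro x ⟨m, rfl⟩; exact hbbA m)) hXinf
    -- the finite beginning of X
    have hXfin : (X ∩ Set.Iio n).Finite := (Set.finite_Iio n).subset Set.inter_subset_right
    set s : Finset ℕ := hXfin.toFinset with hs
    have hsX : ∀ x, x ∈ s ↔ x ∈ X ∧ x < n := by
      intro x
      rw [hs, Set.Finite.mem_toFinset]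
      exact Iff.rfl
    have hsbs : s ⊆ (sq n).1.1 := by
      intro x hx
      obtain ⟨hxX, hxn⟩ := (hsX x).mp hx
      obtain ⟨m, hm⟩ := hX hxX
      have : m < n := lt_of_le_of_lt (le_trans (hbbge m) (le_of_eq hm)) hxn
      exact (hbschar n x).mpr ⟨m, this, hm⟩
    have hrejs : rejects c2 s (sq n).1.2 := (sq n).2.2.1 s hsbs
    apply hrejs
    -- the tail is an accepting witness
    refine ⟨bb '' Set.Ici n, ?_, ?_, ?_⟩
    · rintro y ⟨m, hm, rfl⟩
      exact hnest n m hm (hgmem' m)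
    · exact Set.Infinite.image (Set.injOn_of_injective hbbmono.injective)
        (Set.Ici_infinite n)
    · intro T hT hTinf hTs
      have hYX : c2 (↑s ∪ T) = c2 X := by
        apply hn
        · intro x hx
          rcases hx with hx | hx
          · exact (hsX x).mp (Finset.mem_coe.mp hx) |>.1 |> hX |>.elim (fun m hm => hm ▸ hbbA m)
          · obtain ⟨m, _, rfl⟩ := hT hx
            exact hbbA m
        · exact hTinf.mono Set.subset_union_right
        · intro m hm
          constructor
          · rintro (h | h)
            · exact ((hsX m).mp (Finset.mem_coe.mp h)).1
            · obtain ⟨k, hk, rfl⟩ := hT h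
              exact absurd hm (not_lt_of_ge (le_trans hk (hbbge k)))
          · intro h
            exact Or.inl (Finset.mem_coe.mpr ((hsX m).mpr ⟨h, hm⟩))
      rw [hYX, hcX]

/-- Galvin's lemma for finitely many colours. -/
theorem galvinFin {β : Type*} (k : ℕ) : ∀ (F : Finset β), F.card ≤ k →
    ∀ (A : Set ℕ), A.Infinite → ∀ (c : Set ℕ → β),
    (∀ X : Set ℕ, X ⊆ A → X.Infinite → c X ∈ F) →
    (∀ X : Set ℕ, X ⊆ A → X.Infinite → ∃ n : ℕ, ∀ Y : Set ℕ, Y ⊆ A → Y.Infinite →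
      (∀ m, m < n → (m ∈ Y ↔ m ∈ X)) → c Y = c X) →
    ∃ N : Set ℕ, N ⊆ A ∧ N.Infinite ∧ ∃ v : β, ∀ X : Set ℕ, X ⊆ N → X.Infinite →
      c X = v := by
  classical
  induction k with
  | zero =>
    intro F hF A hA c hrange hc
    exfalso
    have := hrange A subset_rfl hA
    rw [Finset.card_eq_zero.mp (Nat.le_zero.mp hF)] at this
    exact absurd this (Finset.notMem_empty _)
  | succ k ih =>
    intro F hF A hA c hrange hc
    have hFne : F.Nonempty := by
      by_contra h
      rw [Finset.not_nonempty_iff_eq_empty.mp h] at hrange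
      exact absurd (hrange A subset_rfl hA) (Finset.notMem_empty _)
    obtain ⟨v0, hv0⟩ := hFne
    set c2 : Set ℕ → Bool := fun X => decide (c X = v0) with hc2
    obtain ⟨N, hNA, hNinf, b, hb⟩ := galvin2 c2 A hA (by
      intro X hX hXinf
      obtain ⟨n, hn⟩ := hc X hX hXinf
      exact ⟨n, fun Y hY hYinf hagree => by
        rw [hc2]
        simp only [hn Y hY hYinf hagree]⟩)
    cases b with
    | true =>
      refine ⟨N, hNA, hNinf, v0, fun X hX hXinf => ?_⟩
      have := hb X hX hXinf
      rw [hc2] at this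
      exact of_decide_eq_true this
    | false =>
      have hrange' : ∀ X : Set ℕ, X ⊆ N → X.Infinite → c X ∈ F.erase v0 := by
        intro X hX hXinf
        refine Finset.mem_erase.mpr ⟨?_, hrange X (hX.trans hNA) hXinf⟩
        have := hb X hX hXinf
        rw [hc2] at this
        exact of_decide_eq_false this
      have hc' : ∀ X : Set ℕ, X ⊆ N → X.Infinite → ∃ n : ℕ, ∀ Y : Set ℕ, Y ⊆ N →
          Y.Infinite → (∀ m, m < n → (m ∈ Y ↔ m ∈ X)) → c Y = c X := by
        intro X hX hXinf
        obtain ⟨n, hn⟩ := hc X (hX.trans hNA) hXinf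
        exact ⟨n, fun Y hY hYinf hagree => hn Y (hY.trans hNA) hYinf hagree⟩
      obtain ⟨N', hN'N, hN'inf, v, hv⟩ := ih (F.erase v0)
        (by
          have := Finset.card_erase_of_mem hv0
          omega)
        N hNinf c hrange' hc'
      exact ⟨N', hN'N.trans hNA, hN'inf, v, hv⟩

end GalvinMain

section Barrier

lemma initSegSet_comp {s t : Finset ℕ} {X : Set ℕ} (hs : InitSegSet s X)
    (ht : InitSegSet t X) : s ⊆ t ∨ t ⊆ s := by
  by_contra h
  push_neg at h
  obtain ⟨hst, hts⟩ := h
  obtain ⟨a, haS, haT⟩ := Finset.not_subset.mp hst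
  obtain ⟨b, hbT, hbS⟩ := Finset.not_subset.mp hts
  have h1 : b < a := ht.2 b hbT a (hs.1 haS) haT
  have h2 : a < b := hs.2 a haS b (ht.1 hbT) hbS
  omega

lemma sInf_mem_initSeg {s : Finset ℕ} {X : Set ℕ} (hs : InitSegSet s X)
    (hne : s.Nonempty) : sInf X ∈ s := by
  by_contra h
  obtain ⟨x, hx⟩ := hne
  have hXne : X.Nonempty := ⟨x, hs.1 hx⟩
  have h1 : x < sInf X := hs.2 x hx (sInf X) (Nat.sInf_mem hXne) h
  have h2 : sInf X ≤ x := Nat.sInf_le (hs.1 hx)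
  omega

/-- An infinite union of distinct finite sets is infinite. -/
lemma unionOf_infinite {B : Set (Finset ℕ)} (hB : B.Infinite) : (unionOf B).Infinite := by
  by_contra h
  rw [Set.not_infinite] at h
  apply hB
  have hsub : B ⊆ ↑(h.toFinset.powerset) := by
    intro s hsB
    simp only [Finset.coe_powerset, Set.mem_preimage, Set.mem_powerset_iff, Finset.coe_subset]
    intro x hx
    rw [Set.Finite.mem_toFinset]
    exact Set.mem_biUnion hsB hx
  exact Set.Finite.subset (Finset.finite_toSet _) hsub

variable {B : Set (Finset ℕ)} (hbar : IsBarrier B)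

include hbar in
lemma initSegSet_unique {s t : Finset ℕ} {X : Set ℕ} (hsB : s ∈ B) (htB : t ∈ B)
    (hs : InitSegSet s X) (ht : InitSegSet t X) : s = t := by
  rcases initSegSet_comp hs ht with h | h
  · exact hbar.2 s hsB t htB h
  · exact (hbar.2 t htB s hsB h).symm

include hbar in
/-- The key `Tri` construction: the initial segments of `X` and of `X` minus its minimum
are related by `Tri`, for any infinite `X`. -/
lemma tri_of_initSegs {s t : Finset ℕ} {X : Set ℕ} (hsB : s ∈ B) (htB : t ∈ B)
    (hsne : s.Nonempty) (hs : InitSegSet s X) (ht : InitSegSet t (X \ {sInf X})) :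
    Tri s t := by
  set m := sInf X with hm
  have hmS : m ∈ s := sInf_mem_initSeg hs hsne
  have hmX : m ∈ X := hs.1 hmS
  -- s.erase m is an initial segment of X \ {m}
  have hes : InitSegSet (s.erase m) (X \ {m}) := by
    constructor
    · intro x hx
      rw [Finset.coe_erase] at hx
      exact ⟨hs.1 hx.1, hx.2⟩
    · intro x hx y hy hyn
      have hxs : x ∈ s := Finset.mem_of_mem_erase hx
      have hys : y ∉ s := by
        intro hys
        apply hyn
        refine Finset.mem_erase.mpr ⟨?_, hys⟩
        intro he
        exact hy.2 he
      exact hs.2 x hxs y hy.1 hys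
  have hmt : m ∉ t := fun hmt => ((ht.1 hmt).2 rfl)
  rcases initSegSet_comp hes ht with h | h
  · -- s.erase m ⊆ t; and strict
    have hne : s.erase m ≠ t := by
      intro he
      have : t ⊆ s := he ▸ Finset.erase_subset m s
      have := hbar.2 t htB s hsB this
      subst this
      exact hmt hmS
    refine ⟨insert m t, ⟨?_, ?_⟩, ?_, m, Finset.mem_insert_self m t, ?_, ?_⟩
    · -- s ⊆ insert m t
      intro x hx
      by_cases hxm : x = m
      · exact hxm ▸ Finset.mem_insert_self m t
      · exact Finset.mem_insert_of_mem (h (Finset.mem_erase.mpr ⟨hxm, hx⟩))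
    · -- initial property of s in insert m t
      intro x hx y hy hyn
      rcases Finset.mem_insert.mp hy with h' | h'
      · exact absurd (h' ▸ hmS) hyn
      · exact hs.2 x hx y (ht.1 h').1 hyn
    · -- s ≠ insert m t
      intro he
      obtain ⟨w, hwt, hwn⟩ := Finset.exists_of_ssubset
        (Finset.ssubset_iff_subset_ne.mpr ⟨h, hne⟩)
      have hws : w ∈ s := by
        rw [he]
        exact Finset.mem_insert_of_mem hwt
      have hwm : w ≠ m := fun hwm => hmt (hwm ▸ hwt)
      exact hwn (Finset.mem_erase.mpr ⟨hwm, hws⟩)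
    · -- minimality of m in insert m t
      intro b hb
      rcases Finset.mem_insert.mp hb with h' | h'
      · exact le_of_eq h'.symm
      · exact Nat.sInf_le (ht.1 h').1
    · -- t = (insert m t).erase m
      rw [Finset.erase_insert hmt]
  · -- t ⊆ s.erase m : contradiction with the barrier property
    exfalso
    have hts : t ⊆ s := h.trans (Finset.erase_subset m s)
    have := hbar.2 t htB s hsB hts
    subst this
    exact hmt hmS

end Barrier

section Main

variable {P : Type*} [PartialOrder P]

theorem main_bqo
    (hwqo : IsWqo ((· ≤ ·) : P → P → Prop))
    (hchain : ∀ I J : Set P,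
      IsIdealRel (· ≤ ·) I → ¬ IsPrincipalRel (· ≤ ·) I →
      IsIdealRel (· ≤ ·) J → ¬ IsPrincipalRel (· ≤ ·) J → I ⊆ J ∨ J ⊆ I) :
    IsBqo ((· ≤ ·) : P → P → Prop) := by
  classical
  intro B hbar f
  by_contra hGood
  have hbad : ∀ s ∈ B, ∀ t ∈ B, Tri s t → ¬ f s ≤ f t := fun s hs t ht htri hle =>
    hGood ⟨s, hs, t, ht, htri, hle⟩
  set U := unionOf B with hU
  have hUinf : U.Infinite := unionOf_infinite hbar.1.1
  -- choose canonical initial segments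
  have hsig0 : ∀ X : Set ℕ, ∃ s : Finset ℕ, X ⊆ U → X.Infinite →
      s ∈ B ∧ s.Nonempty ∧ InitSegSet s X := by
    intro X
    by_cases h : X ⊆ U ∧ X.Infinite
    · obtain ⟨s, hsB, hsne, hseg⟩ := hbar.1.2 X h.1 h.2
      exact ⟨s, fun _ _ => ⟨hsB, hsne, hseg⟩⟩
    · exact ⟨∅, fun h1 h2 => absurd ⟨h1, h2⟩ h⟩
  choose sig hsig using hsig0
  set g : Set ℕ → P := fun X => f (sig X) with hg
  set mdel : Set ℕ → Set ℕ := fun X => X \ {sInf X} with hmdel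
  -- basic facts
  have hsig_eq : ∀ X : Set ℕ, X ⊆ U → X.Infinite → ∀ s ∈ B, InitSegSet s X →
      sig X = s := by
    intro X hXU hXinf s hsB hseg
    exact initSegSet_unique hbar (hsig X hXU hXinf).1 hsB (hsig X hXU hXinf).2.2 hseg
  have hmdel_sub : ∀ X : Set ℕ, mdel X ⊆ X := fun X => Set.diff_subset
  have hmdel_inf : ∀ X : Set ℕ, X.Infinite → (mdel X).Infinite := fun X hX =>
    hX.diff (Set.finite_singleton _)
  -- transferred badness
  have hbadg : ∀ X : Set ℕ, X ⊆ U → X.Infinite → ¬ g X ≤ g (mdel X) := by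
    intro X hXU hXinf hle
    have h1 := hsig X hXU hXinf
    have h2 := hsig (mdel X) ((hmdel_sub X).trans hXU) (hmdel_inf X hXinf)
    exact hbad (sig X) h1.1 (sig (mdel X)) h2.1
      (tri_of_initSegs hbar h1.1 h2.1 h1.2.1 h1.2.2 h2.2.2) hle
  -- continuity of sig
  have hsigcont : ∀ X Y : Set ℕ, X ⊆ U → X.Infinite → Y ⊆ U → Y.Infinite → ∀ n : ℕ,
      (∀ x ∈ sig X, x < n) → (∀ m, m < n → (m ∈ Y ↔ m ∈ X)) → sig Y = sig X := by
    intro X Y hXU hXinf hYU hYinf n hbound hagree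
    apply hsig_eq Y hYU hYinf (sig X) (hsig X hXU hXinf).1
    have hseg := (hsig X hXU hXinf).2.2
    constructor
    · intro x hx
      obtain ⟨x', hx', rfl⟩ : ∃ x' ∈ sig X, (x' : ℕ) = x := by
        simpa using hx
      exact (hagree x' (hbound x' hx')).mpr (hseg.1 hx)
    · intro x hx y hy hyn
      by_cases hyltn : y < n
      · exact hseg.2 x hx y ((hagree y hyltn).mp hy) hyn
      · exact lt_of_lt_of_le (hbound x hx) (le_of_not_gt hyltn)
  -- stability of the minimum
  have hsInfcont : ∀ X Y : Set ℕ, X.Nonempty → ∀ n : ℕ, sInf X < n →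
      (∀ m, m < n → (m ∈ Y ↔ m ∈ X)) → sInf Y = sInf X := by
    intro X Y hXne n hn hagree
    have h1 : sInf X ∈ Y := (hagree _ hn).mpr (Nat.sInf_mem hXne)
    have h2 : sInf Y ≤ sInf X := Nat.sInf_le h1
    rcases lt_or_eq_of_le h2 with h | h
    · exfalso
      have h3 : sInf Y ∈ X := (hagree _ (lt_trans h hn)).mp (Nat.sInf_mem ⟨_, h1⟩)
      exact absurd (Nat.sInf_le h3) (not_le_of_gt h)
    · exact h
  -- minimum of sig X is the minimum of X
  have hsInf_mem_sig : ∀ X : Set ℕ, X ⊆ U → X.Infinite → sInf X ∈ sig X := by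
    intro X hXU hXinf
    exact sInf_mem_initSeg (hsig X hXU hXinf).2.2 (hsig X hXU hXinf).2.1
  -- the chi relation and the colouring
  set chle : P → P → Prop := fun a b => ∀ I : Set P, IsIdealRel (· ≤ ·) I →
    ¬ IsPrincipalRel (· ≤ ·) I → b ∈ I → a ∈ I with hchle
  set col : Set ℕ → Bool := fun X => decide (chle (g X) (g (mdel X))) with hcol
  have hcolcont : ∀ X : Set ℕ, X ⊆ U → X.Infinite → ∃ n : ℕ, ∀ Y : Set ℕ, Y ⊆ U →
      Y.Infinite → (∀ m, m < n → (m ∈ Y ↔ m ∈ X)) → col Y = col X := by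
    intro X hXU hXinf
    have hmXU : mdel X ⊆ U := (hmdel_sub X).trans hXU
    have hmXinf := hmdel_inf X hXinf
    set n := ((sig X ∪ sig (mdel X)).sup id) + 1 with hn
    have hb1 : ∀ x ∈ sig X, x < n := by
      intro x hx
      have : id x ≤ (sig X ∪ sig (mdel X)).sup id :=
        Finset.le_sup (Finset.mem_union_left _ hx)
      simp only [id] at this
      omega
    have hb2 : ∀ x ∈ sig (mdel X), x < n := by
      intro x hx
      have : id x ≤ (sig X ∪ sig (mdel X)).sup id :=
        Finset.le_sup (Finset.mem_union_right _ hx)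
      simp only [id] at this
      omega
    refine ⟨n, fun Y hYU hYinf hagree => ?_⟩
    have hs1 : sig Y = sig X := hsigcont X Y hXU hXinf hYU hYinf n hb1 hagree
    have hsm : sInf X < n := hb1 _ (hsInf_mem_sig X hXU hXinf)
    have hse : sInf Y = sInf X := hsInfcont X Y hXinf.nonempty n hsm hagree
    have hagree' : ∀ m, m < n → (m ∈ mdel Y ↔ m ∈ mdel X) := by
      intro m hm
      simp only [hmdel, Set.mem_diff, Set.mem_singleton_iff, hse]
      rw [hagree m hm]
    have hs2 : sig (mdel Y) = sig (mdel X) := hsigcont (mdel X) (mdel Y) hmXU hmXinf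
      ((hmdel_sub Y).trans hYU) (hmdel_inf Y hYinf) n hb2 hagree'
    have e1 : g Y = g X := by simp only [hg]; rw [hs1]
    have e2 : g (mdel Y) = g (mdel X) := by simp only [hg]; rw [hs2]
    simp only [hcol]
    rw [e1, e2]
  obtain ⟨N, hNU, hNinf, b, hcolN⟩ := galvin2 col U hUinf hcolcont
  cases b with
  | false =>
    -- descending world
    have hdesc : ∀ X : Set ℕ, X ⊆ N → X.Infinite → ¬ chle (g X) (g (mdel X)) := by
      intro X hXN hXinf
      have := hcolN X hXN hXinf
      rw [hcol] at this
      exact of_decide_eq_false this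
    set XX : ℕ → Set ℕ := fun k => Nat.rec N (fun _ X => mdel X) k with hXX
    have hXXsucc : ∀ k, XX (k + 1) = mdel (XX k) := fun k => rfl
    have hXXsub : ∀ k, XX k ⊆ N := by
      intro k
      induction k with
      | zero => exact subset_rfl
      | succ j ih => exact (hmdel_sub (XX j)).trans ih
    have hXXinf : ∀ k, (XX k).Infinite := by
      intro k
      induction k with
      | zero => exact hNinf
      | succ j ih => exact hmdel_inf (XX j) ih
    have hw : ∀ k, ∃ I : Set P, IsIdealRel (· ≤ ·) I ∧ ¬ IsPrincipalRel (· ≤ ·) I ∧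
        g (XX (k + 1)) ∈ I ∧ g (XX k) ∉ I := by
      intro k
      have := hdesc (XX k) (hXXsub k) (hXXinf k)
      simp only [hchle] at this
      push_neg at this
      obtain ⟨I, hI1, hI2, hI3, hI4⟩ := this
      exact ⟨I, hI1, hI2, (hXXsucc k) ▸ hI3, hI4⟩
    choose Iseq hI1 hI2 hI3 hI4 using hw
    have hnested : ∀ k, Iseq (k + 1) ⊆ Iseq k := by
      intro k
      rcases hchain (Iseq (k + 1)) (Iseq k) (hI1 _) (hI2 _) (hI1 _) (hI2 _) with h | h
      · exact h
      · exact absurd (h (hI3 k)) (hI4 (k + 1))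
    have hnested' : ∀ m k, m ≤ k → Iseq k ⊆ Iseq m := by
      intro m k h
      induction k with
      | zero => rw [Nat.le_zero.mp h]
      | succ j ih =>
        rcases Nat.le_succ_iff.mp h with h' | h'
        · exact (hnested j).trans (ih h')
        · rw [h']
    obtain ⟨i, j, hij, hle⟩ := wqo_good hwqo (fun k => g (XX (k + 1)))
    have h1 : g (XX (j + 1)) ∈ Iseq (i + 1) := hnested' (i + 1) j hij (hI3 j)
    exact hI4 (i + 1) ((hI1 (i + 1)).2.1 _ _ hle h1)
  | true =>
    -- ascending/flat world: level induction
    have hchleN : ∀ X : Set ℕ, X ⊆ N → X.Infinite → chle (g X) (g (mdel X)) := by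
      intro X hXN hXinf
      have := hcolN X hXN hXinf
      rw [hcol] at this
      exact of_decide_eq_true this
    have LEVEL : ∀ k : ℕ, ∀ e : Finset ℕ, e.card = k → ↑e ⊆ N → ∀ q : P, ∀ NN : Set ℕ,
        NN ⊆ N → NN.Infinite → (∀ x ∈ e, ∀ y ∈ NN, x < y) →
        (∀ T : Set ℕ, T ⊆ NN → T.Infinite → g (↑e ∪ T) = q) → False := by
      intro k
      induction k with
      | zero =>
        intro e hcard heN q NN hNNsub hNNinf hbound hconst
        have he : e = ∅ := Finset.card_eq_zero.mp hcard
        subst he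
        have h1 : g NN = q := by
          have := hconst NN subset_rfl hNNinf
          simpa using this
        have h2 : g (mdel NN) = q := by
          have := hconst (mdel NN) (hmdel_sub NN) (hmdel_inf NN hNNinf)
          simpa using this
        exact hbadg NN (hNNsub.trans hNU) hNNinf (by rw [h1, h2])
      | succ k ih =>
        intro e hcard heN q NN hNNsub hNNinf hbound hconst
        have hene : e.Nonempty := Finset.card_pos.mp (by omega)
        set m := e.min' hene with hm
        have hmE : m ∈ e := e.min'_mem hene
        set e' := e.erase m with he'
        have he'card : e'.card = k := by
          rw [he', Finset.card_erase_of_mem hmE, hcard]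
          omega
        have he'N : ↑e' ⊆ N := by
          intro x hx
          exact heN (Finset.mem_coe.mpr (Finset.mem_of_mem_erase (Finset.mem_coe.mp hx)))
        -- removing the minimum from a thread
        have hkey : ∀ T : Set ℕ, T ⊆ NN → T.Infinite → mdel (↑e ∪ T) = ↑e' ∪ T := by
          intro T hT _
          have hmem : m ∈ (↑e ∪ T : Set ℕ) := Or.inl (Finset.mem_coe.mpr hmE)
          have hsinf : sInf (↑e ∪ T : Set ℕ) = m := by
            have hle : ∀ y ∈ (↑e ∪ T : Set ℕ), m ≤ y := by
              rintro y (hy | hy)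
              · exact e.min'_le y (Finset.mem_coe.mp hy)
              · exact le_of_lt (hbound m hmE y (hT hy))
            exact le_antisymm (Nat.sInf_le hmem) (hle _ (Nat.sInf_mem ⟨m, hmem⟩))
          have : mdel (↑e ∪ T) = (↑e ∪ T : Set ℕ) \ {m} := by
            simp only [hmdel]
            rw [hsinf]
          rw [this]
          ext x
          simp only [Set.mem_diff, Set.mem_union, Set.mem_singleton_iff, Finset.mem_coe,
            he', Finset.mem_erase]
          constructor
          · rintro ⟨h1 | h1, h2⟩
            · exact Or.inl ⟨h2, h1⟩
            · exact Or.inr h1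
          · rintro (⟨h1, h2⟩ | h1)
            · exact ⟨Or.inl h2, h1⟩
            · refine ⟨Or.inr h1, ?_⟩
              intro hxm
              have := hbound m hmE x (hT h1)
              omega
        -- alignment from badness and constancy
        have halign : ∀ T : Set ℕ, T ⊆ NN → T.Infinite → ¬ q ≤ g (↑e' ∪ T) := by
          intro T hT hTinf hle
          have hXU : (↑e ∪ T : Set ℕ) ⊆ U := by
            rintro x (hx | hx)
            · exact hNU (heN hx)
            · exact hNU (hNNsub (hT hx))
          have hXinf : (↑e ∪ T : Set ℕ).Infinite := hTinf.mono Set.subset_union_right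
          have hcontra := hbadg _ hXU hXinf
          rw [hconst T hT hTinf, hkey T hT hTinf] at hcontra
          exact hcontra hle
        set V : Set P := {p | ∃ T : Set ℕ, T ⊆ NN ∧ T.Infinite ∧ g (↑e' ∪ T) = p} with hV
        by_cases hVinf : V.Infinite
        · -- infinite column: contradiction via the chi relation and an ideal
          obtain ⟨c, hcV, hclt⟩ := wqo_chain hwqo V hVinf
          set J : Set P := {p | ∃ i, p ≤ c i} with hJ
          have hcmono : ∀ i j, i ≤ j → c i ≤ c j := by
            intro i j hij
            rcases lt_or_eq_of_le hij with h | h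
            · exact le_of_lt (hclt i j h)
            · exact h ▸ le_refl _
          have hJideal : IsIdealRel (· ≤ ·) J := by
            refine ⟨⟨c 0, 0, le_refl _⟩, ?_, ?_⟩
            · rintro x y hxy ⟨i, hyi⟩
              exact ⟨i, le_trans hxy hyi⟩
            · rintro x ⟨i, hxi⟩ y ⟨j, hyj⟩
              exact ⟨c (max i j), ⟨max i j, le_refl _⟩,
                le_trans hxi (hcmono i _ (le_max_left i j)),
                le_trans hyj (hcmono j _ (le_max_right i j))⟩
          have hJnp : ¬ IsPrincipalRel (· ≤ ·) J := by
            rintro ⟨a, ⟨i, hai⟩, hmax⟩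
            have h2 : c (i + 1) ≤ a := hmax _ ⟨i + 1, le_refl _⟩
            exact absurd (hclt i (i + 1) (Nat.lt_succ_self i))
              (not_lt_of_ge (le_trans h2 hai))
          obtain ⟨T1, hT1, hT1inf, hgT1⟩ := hcV 0
          have hYN : (↑e ∪ T1 : Set ℕ) ⊆ N := by
            rintro x (hx | hx)
            · exact heN hx
            · exact hNNsub (hT1 hx)
          have hYinf : (↑e ∪ T1 : Set ℕ).Infinite := hT1inf.mono Set.subset_union_right
          have hch := hchleN _ hYN hYinf
          rw [hconst T1 hT1 hT1inf, hkey T1 hT1 hT1inf, hgT1] at hch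
          simp only [hchle] at hch
          obtain ⟨i, hqi⟩ := hch J hJideal hJnp ⟨0, le_refl _⟩
          obtain ⟨Ti, hTi, hTiinf, hgTi⟩ := hcV i
          exact halign Ti hTi hTiinf (hgTi ▸ hqi)
        · -- finite column: make it constant and recurse
          rw [Set.not_infinite] at hVinf
          have hrange : ∀ T : Set ℕ, T ⊆ NN → T.Infinite →
              g (↑e' ∪ T) ∈ hVinf.toFinset := by
            intro T hT hTinf
            rw [Set.Finite.mem_toFinset]
            exact ⟨T, hT, hTinf, rfl⟩
          have hcont2 : ∀ T : Set ℕ, T ⊆ NN → T.Infinite → ∃ n : ℕ, ∀ Y : Set ℕ,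
              Y ⊆ NN → Y.Infinite → (∀ m', m' < n → (m' ∈ Y ↔ m' ∈ T)) →
              g (↑e' ∪ Y) = g (↑e' ∪ T) := by
            intro T hT hTinf
            have hXU : (↑e' ∪ T : Set ℕ) ⊆ U := by
              rintro x (hx | hx)
              · exact hNU (he'N hx)
              · exact hNU (hNNsub (hT hx))
            have hXinf : (↑e' ∪ T : Set ℕ).Infinite := hTinf.mono Set.subset_union_right
            set n := ((sig (↑e' ∪ T) ∪ e').sup id) + 1 with hn
            have hb1 : ∀ x ∈ sig (↑e' ∪ T), x < n := by
              intro x hx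
              have : id x ≤ (sig (↑e' ∪ T) ∪ e').sup id :=
                Finset.le_sup (Finset.mem_union_left _ hx)
              simp only [id] at this
              omega
            have hb2 : ∀ x ∈ e', x < n := by
              intro x hx
              have : id x ≤ (sig (↑e' ∪ T) ∪ e').sup id :=
                Finset.le_sup (Finset.mem_union_right _ hx)
              simp only [id] at this
              omega
            refine ⟨n, fun Y hY hYinf hagree => ?_⟩
            have hYU : (↑e' ∪ Y : Set ℕ) ⊆ U := by
              rintro x (hx | hx)
              · exact hNU (he'N hx)
              · exact hNU (hNNsub (hY hx))
            have hYinf' : (↑e' ∪ Y : Set ℕ).Infinite := hYinf.mono Set.subset_union_right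
            have hagree' : ∀ m', m' < n → (m' ∈ (↑e' ∪ Y : Set ℕ) ↔ m' ∈ (↑e' ∪ T : Set ℕ)) := by
              intro m' hm'
              constructor
              · rintro (h | h)
                · exact Or.inl h
                · exact Or.inr ((hagree m' hm').mp h)
              · rintro (h | h)
                · exact Or.inl h
                · exact Or.inr ((hagree m' hm').mpr h)
            have := hsigcont (↑e' ∪ T) (↑e' ∪ Y) hXU hXinf hYU hYinf' n hb1 hagree'
            simp only [hg]
            rw [this]
          obtain ⟨NN', hNN'sub, hNN'inf, v, hv⟩ := galvinFin (hVinf.toFinset.card)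
            hVinf.toFinset (le_refl _) NN hNNinf (fun T => g (↑e' ∪ T)) hrange hcont2
          refine ih e' he'card he'N v NN' (hNN'sub.trans hNNsub) hNN'inf ?_ ?_
          · intro x hx y hy
            exact hbound x (Finset.mem_of_mem_erase (by rwa [← he'])) y (hNN'sub hy)
          · exact fun T hT hTinf => hv T hT hTinf

    -- apply at the root
    have hrspec := hsig N hNU hNinf
    set r := sig N with hr
    set Mb := r.sup id with hMb
    set NN0 : Set ℕ := {x ∈ N | Mb < x} with hNN0
    have hNN0sub : NN0 ⊆ N := fun x hx => hx.1
    have hNN0inf : NN0.Infinite := by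
      have hsub : N \ (Set.Iic Mb) ⊆ NN0 := fun x hx =>
        ⟨hx.1, lt_of_not_ge (fun h => hx.2 h)⟩
      exact (hNinf.diff (Set.finite_Iic Mb)).mono hsub
    have hbound0 : ∀ x ∈ r, ∀ y ∈ NN0, x < y := by
      intro x hx y hy
      have : id x ≤ Mb := Finset.le_sup hx
      simp only [id] at this
      exact lt_of_le_of_lt this hy.2
    have hrN : ↑r ⊆ N := hrspec.2.2.1
    have hconst0 : ∀ T : Set ℕ, T ⊆ NN0 → T.Infinite → g (↑r ∪ T) = f r := by
      intro T hT hTinf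
      have hXU : (↑r ∪ T : Set ℕ) ⊆ U := by
        rintro x (hx | hx)
        · exact hNU (hrN hx)
        · exact hNU (hNN0sub (hT hx))
      have hXinf : (↑r ∪ T : Set ℕ).Infinite := hTinf.mono Set.subset_union_right
      have hseg : InitSegSet r (↑r ∪ T) := by
        constructor
        · exact Set.subset_union_left
        · intro x hx y hy hyn
          rcases hy with hy | hy
          · exact absurd (Finset.mem_coe.mp hy) hyn
          · exact hbound0 x hx y (hT hy)
      have : sig (↑r ∪ T) = r := hsig_eq _ hXU hXinf r hrspec.1 hseg
      simp only [hg]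
      rw [this]
    exact LEVEL r.card r rfl hrN (f r) NN0 hNN0sub hNN0inf hbound0 hconst0

end Main

end BqoProof

/-- If `P` is wqo and the set of non-principal ideals of `P` is linearly ordered by
inclusion, then `P` is bqo. -/
theorem stmt4 {P : Type*} [PartialOrder P]
    (hwqo : IsWqo ((· ≤ ·) : P → P → Prop))
    (hchain : ∀ I J : Set P,
      IsIdealRel (· ≤ ·) I → ¬ IsPrincipalRel (· ≤ ·) I →
      IsIdealRel (· ≤ ·) J → ¬ IsPrincipalRel (· ≤ ·) J → I ⊆ J ∨ J ⊆ I) :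
    IsBqo ((· ≤ ·) : P → P → Prop) := by
  exact BqoProof.main_bqo hwqo hchain
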